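/- Convolution identity relating impulse response function and point spread function: Let f : ℝ² → ℂ be a Schwartz function and φ : ℝ → ℝ an even Schwartz function. Define the filtered initial pressure g : ℝ² → ℂ by (ℱg)(ξ) = (ℱφ)(‖ξ‖) · (ℱf)(ξ) (i.e. g = Φ ∗ f where ℱΦ(ξ) = ℱ_tφ(‖ξ‖)), and define the wave solutions p_f(x, t) = (2π)^{-2} ∫_{ℝ²} cos(t‖ξ‖) (ℱf)(ξ) e^{i⟨x, ξ⟩} dξ and p_g(x, t) = (2π)^{-2} ∫_{ℝ²} cos(t‖ξ‖) (ℱg)(ξ) e^{i⟨x, ξ⟩} dξ. Then for all x ∈ ℝ² and t ∈ ℝ, ∫_ℝ φ(t − s) p_f(x, s) ds = p_g(x, t); that is, φ ∗_t (W f) = W(Φ ∗ f). -/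

import Mathlib

open MeasureTheory

noncomputable section

/-- The plane `ℝ²` as a Euclidean space. -/
abbrev E2 := EuclideanSpace ℝ (Fin 2)

/-- Fourier transform on `ℝ²` with the convention `ℱf(ξ) = ∫ f(x) e^{-i⟨x,ξ⟩} dx`. -/
def fourier2 (f : E2 → ℂ) (ξ : E2) : ℂ :=
  ∫ x : E2, Complex.exp (-(Complex.I * ((inner ℝ x ξ : ℝ) : ℂ))) * f x

/-- Fourier transform on `ℝ` with the convention `ℱg(ω) = ∫ g(t) e^{-iωt} dt`. -/
def fourier1 (g : ℝ → ℂ) (ω : ℝ) : ℂ :=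
  ∫ t : ℝ, Complex.exp (-(Complex.I * ω * t)) * g t

/-- The wave solution with prescribed spatial Fourier data `F`:
`p(x,t) = (2π)⁻² ∫ cos(t‖ξ‖) F(ξ) e^{i⟨x,ξ⟩} dξ`. -/
def waveSolF (F : E2 → ℂ) (x : E2) (t : ℝ) : ℂ :=
  (1 / (2 * Real.pi) ^ 2 : ℂ) *
    ∫ ξ : E2, (Real.cos (t * ‖ξ‖) : ℂ) * F ξ *
      Complex.exp (Complex.I * ((inner ℝ x ξ : ℝ) : ℂ))

open Real
open scoped FourierTransform InnerProductSpace

/-! ### Auxiliary lemmas -/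

lemma fourier2_eq (f : SchwartzMap E2 ℂ) (ξ : E2) :
    fourier2 f ξ = (𝓕 ⇑f) ((2*π)⁻¹ • ξ) := by
  rw [Real.fourier_eq']
  unfold fourier2
  congr 1; funext x
  rw [smul_eq_mul]
  congr 1
  rw [real_inner_smul_right]
  rw [show (-2*π*((2*π)⁻¹ * (inner ℝ x ξ : ℝ))) = -(inner ℝ x ξ : ℝ) by
    field_simp]
  push_cast
  ring

lemma fourier2_integrable (f : SchwartzMap E2 ℂ) : Integrable (fourier2 ⇑f) := by
  have h : fourier2 ⇑f = fun ξ => (SchwartzMap.fourierTransformCLM ℂ f) ((2*π)⁻¹ • ξ) := by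
    funext ξ
    rw [fourier2_eq, SchwartzMap.fourierTransformCLM_apply, SchwartzMap.fourier_coe]
  rw [h]
  exact (SchwartzMap.fourierTransformCLM ℂ f).integrable.comp_smul
    (inv_ne_zero (by positivity))

lemma fourier2_continuous (f : SchwartzMap E2 ℂ) : Continuous (fourier2 ⇑f) := by
  have h : fourier2 ⇑f = fun ξ => (SchwartzMap.fourierTransformCLM ℂ f) ((2*π)⁻¹ • ξ) := by
    funext ξ
    rw [fourier2_eq, SchwartzMap.fourierTransformCLM_apply, SchwartzMap.fourier_coe]
  rw [h]
  exact (SchwartzMap.fourierTransformCLM ℂ f).continuous.comp (continuous_const_smul _)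

lemma exp_neg_I_mul (θ : ℝ) :
    Complex.exp (-(Complex.I * θ)) = (Real.cos θ : ℂ) - (Real.sin θ : ℂ) * Complex.I := by
  rw [show (-(Complex.I * (θ:ℂ))) = ((-θ : ℝ) : ℂ) * Complex.I by push_cast; ring,
    Complex.exp_mul_I]
  push_cast
  simp [Real.cos_neg, Real.sin_neg]
  ring

lemma integrable_trig_mul (φ : SchwartzMap ℝ ℝ) (c : ℝ → ℝ) (hc : Continuous c)
    (hbd : ∀ u, |c u| ≤ 1) :
    Integrable (fun u : ℝ => (c u : ℂ) * (φ u : ℂ)) := by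
  refine Integrable.bdd_mul φ.integrable.ofReal
    (Complex.continuous_ofReal.comp hc).aestronglyMeasurable (c := 1) (Filter.Eventually.of_forall fun u => ?_)
  simpa using hbd u

lemma integral_sin_mul_eq_zero (φ : SchwartzMap ℝ ℝ) (hφeven : ∀ t : ℝ, φ (-t) = φ t) (ω : ℝ) :
    ∫ u : ℝ, (Real.sin (ω * u) : ℂ) * (φ u : ℂ) = 0 := by
  have h := MeasureTheory.integral_neg_eq_self
    (fun u : ℝ => (Real.sin (ω * u) : ℂ) * (φ u : ℂ)) volume
  have h2 : (∫ u : ℝ, (Real.sin (ω * -u) : ℂ) * (φ (-u) : ℂ))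
      = -∫ u : ℝ, (Real.sin (ω * u) : ℂ) * (φ u : ℂ) := by
    rw [← integral_neg]
    congr 1; funext u
    rw [hφeven u, mul_neg, Real.sin_neg]
    push_cast; ring
  rw [h2] at h
  linear_combination (-(1:ℂ)/2) * h

lemma fourier1_eq_cos (φ : SchwartzMap ℝ ℝ) (hφeven : ∀ t : ℝ, φ (-t) = φ t) (ω : ℝ) :
    fourier1 (fun s : ℝ => (φ s : ℂ)) ω = ∫ u : ℝ, (Real.cos (ω * u) : ℂ) * (φ u : ℂ) := by
  unfold fourier1
  have : ∀ u : ℝ, Complex.exp (-(Complex.I * ω * u)) * (φ u : ℂ)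
      = (Real.cos (ω * u) : ℂ) * (φ u : ℂ)
        - Complex.I * ((Real.sin (ω * u) : ℂ) * (φ u : ℂ)) := by
    intro u
    rw [show (-(Complex.I * ω * u) : ℂ) = -(Complex.I * ((ω * u : ℝ) : ℂ)) by push_cast; ring,
      exp_neg_I_mul]
    ring
  simp_rw [this]
  have hcos : Integrable (fun u : ℝ => (Real.cos (ω * u) : ℂ) * (φ u : ℂ)) :=
    integrable_trig_mul φ _ (by fun_prop) (fun u => abs_cos_le_one _)
  have hsin : Integrable (fun u : ℝ => (Real.sin (ω * u) : ℂ) * (φ u : ℂ)) :=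
    integrable_trig_mul φ _ (by fun_prop) (fun u => abs_sin_le_one _)
  rw [integral_sub hcos (hsin.const_mul _),
    integral_const_mul, integral_sin_mul_eq_zero φ hφeven, mul_zero, sub_zero]

lemma conv_cos (φ : SchwartzMap ℝ ℝ) (hφeven : ∀ t : ℝ, φ (-t) = φ t) (t ω : ℝ) :
    (∫ s : ℝ, (φ (t - s) : ℂ) * (Real.cos (s * ω) : ℂ))
      = (Real.cos (t * ω) : ℂ) * fourier1 (fun s : ℝ => (φ s : ℂ)) ω := by
  have h1 : (∫ s : ℝ, (φ (t - s) : ℂ) * (Real.cos (s * ω) : ℂ))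
      = ∫ u : ℝ, (φ u : ℂ) * (Real.cos ((t - u) * ω) : ℂ) := by
    rw [← MeasureTheory.integral_sub_left_eq_self
      (fun u : ℝ => (φ u : ℂ) * (Real.cos ((t - u) * ω) : ℂ)) volume t]
    simp [sub_sub_cancel]
  rw [h1, fourier1_eq_cos φ hφeven]
  have expand : ∀ u : ℝ, (φ u : ℂ) * (Real.cos ((t - u) * ω) : ℂ)
      = (Real.cos (t * ω) : ℂ) * ((Real.cos (ω * u) : ℂ) * (φ u : ℂ))
        + (Real.sin (t * ω) : ℂ) * ((Real.sin (ω * u) : ℂ) * (φ u : ℂ)) := by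
    intro u
    rw [sub_mul, Real.cos_sub, mul_comm u ω]
    push_cast; ring
  simp_rw [expand]
  have hcos : Integrable (fun u : ℝ => (Real.cos (ω * u) : ℂ) * (φ u : ℂ)) :=
    integrable_trig_mul φ _ (by fun_prop) (fun u => abs_cos_le_one _)
  have hsin : Integrable (fun u : ℝ => (Real.sin (ω * u) : ℂ) * (φ u : ℂ)) :=
    integrable_trig_mul φ _ (by fun_prop) (fun u => abs_sin_le_one _)
  rw [integral_add (hcos.const_mul _) (hsin.const_mul _),
    integral_const_mul, integral_const_mul, integral_sin_mul_eq_zero φ hφeven, mul_zero, add_zero]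

/-- **Convolution identity relating the impulse response function and the point
spread function** (`φ ∗ₜ (W f) = W (Φ ∗ f)`).  Here `f` is a Schwartz initial
pressure, `φ` an even Schwartz impulse response, `p_f = waveSolF (ℱf)` the wave
solution for `f`, and `p_g = waveSolF (ℱφ(‖·‖)·ℱf)` the wave solution for the
filtered source `g = Φ ∗ f` whose Fourier transform is `ℱg(ξ) = ℱφ(‖ξ‖) ℱf(ξ)`. -/
theorem temporal_convolution_eq_wave_of_filtered
    (f : SchwartzMap E2 ℂ) (φ : SchwartzMap ℝ ℝ)
    (hφeven : ∀ t : ℝ, φ (-t) = φ t) :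
    ∀ (x : E2) (t : ℝ),
      (∫ s : ℝ, (φ (t - s) : ℂ) * waveSolF (fourier2 f) x s) =
        waveSolF (fun ξ : E2 => fourier1 (fun s : ℝ => (φ s : ℂ)) ‖ξ‖ * fourier2 f ξ) x t := by
  intro x t
  have hFi : Integrable (fourier2 ⇑f) := fourier2_integrable f
  have hFc : Continuous (fourier2 ⇑f) := fourier2_continuous f
  have hK : Integrable (fun ξ : E2 =>
      fourier2 ⇑f ξ * Complex.exp (Complex.I * ((inner ℝ x ξ : ℝ) : ℂ))) := by
    have h1 : Integrable (fun ξ : E2 =>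
        Complex.exp (Complex.I * ((inner ℝ x ξ : ℝ) : ℂ)) * fourier2 ⇑f ξ) := by
      refine hFi.bdd_mul (c := 1) ?_ (Filter.Eventually.of_forall fun ξ => ?_)
      · exact (Complex.continuous_exp.comp (continuous_const.mul
          (Complex.continuous_ofReal.comp
            (Continuous.inner continuous_const continuous_id)))).aestronglyMeasurable
      · simp [Complex.norm_exp]
    exact h1.congr (Filter.Eventually.of_forall fun ξ => mul_comm _ _)
  have hH : Integrable (Function.uncurry fun (s : ℝ) (ξ : E2) =>
      (φ (t - s) : ℂ) * ((Real.cos (s * ‖ξ‖) : ℂ) *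
        (fourier2 ⇑f ξ * Complex.exp (Complex.I * ((inner ℝ x ξ : ℝ) : ℂ)))))
      (volume.prod volume) := by
    have hg : Integrable (fun p : ℝ × E2 => ‖(φ (t - p.1) : ℂ)‖ *
        ‖fourier2 ⇑f p.2 * Complex.exp (Complex.I * ((inner ℝ x p.2 : ℝ) : ℂ))‖)
        (volume.prod volume) := by
      refine Integrable.mul_prod (f := fun s : ℝ => ‖(φ (t - s) : ℂ)‖) ?_ hK.norm
      exact ((φ.integrable.comp_sub_left t).norm).congr
        (Filter.Eventually.of_forall fun s => (Complex.norm_real _).symm)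
    refine hg.mono' ?_ (Filter.Eventually.of_forall fun p => ?_)
    · apply Continuous.aestronglyMeasurable
      apply Continuous.mul
      · exact Complex.continuous_ofReal.comp (φ.continuous.comp
          (continuous_const.sub continuous_fst))
      · apply Continuous.mul
        · exact Complex.continuous_ofReal.comp (Real.continuous_cos.comp
            (continuous_fst.mul (continuous_norm.comp continuous_snd)))
        · exact ((hFc.comp continuous_snd).mul (Complex.continuous_exp.comp
            (continuous_const.mul (Complex.continuous_ofReal.comp
              ((Continuous.inner continuous_const continuous_id).comp continuous_snd)))))
    · obtain ⟨s, ξ⟩ := p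
      simp only [Function.uncurry_apply_pair, norm_mul]
      have hb : ‖(Real.cos (s * ‖ξ‖) : ℂ)‖ ≤ 1 := by
        rw [Complex.norm_real, Real.norm_eq_abs]
        exact abs_cos_le_one _
      calc ‖(φ (t - s) : ℂ)‖ * (‖(Real.cos (s * ‖ξ‖) : ℂ)‖ *
            (‖fourier2 ⇑f ξ‖ * ‖Complex.exp (Complex.I * ((inner ℝ x ξ : ℝ) : ℂ))‖))
          ≤ ‖(φ (t - s) : ℂ)‖ * (1 *
            (‖fourier2 ⇑f ξ‖ * ‖Complex.exp (Complex.I * ((inner ℝ x ξ : ℝ) : ℂ))‖)) := by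
            gcongr
        _ = ‖(φ (t - s) : ℂ)‖ *
            (‖fourier2 ⇑f ξ‖ * ‖Complex.exp (Complex.I * ((inner ℝ x ξ : ℝ) : ℂ))‖) := by ring
  calc (∫ s : ℝ, (φ (t - s) : ℂ) * waveSolF (fourier2 ⇑f) x s)
      = ∫ s : ℝ, (1 / (2 * Real.pi) ^ 2 : ℂ) * ∫ ξ : E2, (φ (t - s) : ℂ) *
          ((Real.cos (s * ‖ξ‖) : ℂ) *
            (fourier2 ⇑f ξ * Complex.exp (Complex.I * ((inner ℝ x ξ : ℝ) : ℂ)))) := by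
        unfold waveSolF
        congr 1; funext s
        rw [mul_left_comm]
        congr 1
        rw [← integral_const_mul]
        congr 1; funext ξ
        ring
    _ = (1 / (2 * Real.pi) ^ 2 : ℂ) * ∫ s : ℝ, ∫ ξ : E2, (φ (t - s) : ℂ) *
          ((Real.cos (s * ‖ξ‖) : ℂ) *
            (fourier2 ⇑f ξ * Complex.exp (Complex.I * ((inner ℝ x ξ : ℝ) : ℂ)))) := by
        rw [integral_const_mul]
    _ = (1 / (2 * Real.pi) ^ 2 : ℂ) * ∫ ξ : E2, ∫ s : ℝ, (φ (t - s) : ℂ) *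
          ((Real.cos (s * ‖ξ‖) : ℂ) *
            (fourier2 ⇑f ξ * Complex.exp (Complex.I * ((inner ℝ x ξ : ℝ) : ℂ)))) := by
        rw [integral_integral_swap hH]
    _ = (1 / (2 * Real.pi) ^ 2 : ℂ) * ∫ ξ : E2,
          ((Real.cos (t * ‖ξ‖) : ℂ) * fourier1 (fun s : ℝ => (φ s : ℂ)) ‖ξ‖) *
            (fourier2 ⇑f ξ * Complex.exp (Complex.I * ((inner ℝ x ξ : ℝ) : ℂ))) := by
        congr 1
        congr 1; funext ξ
        rw [← conv_cos φ hφeven t ‖ξ‖, ← integral_mul_const]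
        congr 1; funext s
        ring
    _ = waveSolF (fun ξ : E2 => fourier1 (fun s : ℝ => (φ s : ℂ)) ‖ξ‖ * fourier2 ⇑f ξ) x t := by
        unfold waveSolF
        congr 1
        congr 1; funext ξ
        ring
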